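/- Let X be a Hausdorff topological space and let D be a countable subset of X each of whose elements is a W̃-point of X. Then every point x in the closure of D is a W̃-point of X. -/

import Mathlib

open Filter Set Topology

/-- `x` is a W̃-point: player I has a winning strategy in the game G̃(x), where player I
chooses arbitrary nonempty open sets and player II picks points in them; player I wins
when `x` is an accumulation point (cluster point) of the resulting sequence. -/
def IsWtildePoint {X : Type*} [TopologicalSpace X] (x : X) : Prop :=
  ∃ σ : List X → Set X,
    (∀ h : List X, IsOpen (σ h) ∧ (σ h).Nonempty) ∧
    ∀ p : ℕ → X,
      (∀ n : ℕ, p n ∈ σ (List.ofFn fun i : Fin n => p i)) →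
      MapClusterPt x atTop p

/-- If  lies in the closure of a countable set of W̃-points of a Hausdorff space ,
then  is itself a W̃-point of . -/
theorem closure_of_countable_wtilde_points {X : Type*} [TopologicalSpace X] [T2Space X]
    (D : Set X) (hD : D.Countable) (hW : ∀ d ∈ D, IsWtildePoint d)
    (x : X) (hx : x ∈ closure D) :
    IsWtildePoint x := by
  have hDne : D.Nonempty := by
    rcases D.eq_empty_or_nonempty with h | h
    · rw [h, closure_empty] at hx; exact absurd hx (notMem_empty x)
    · exact h
  obtain ⟨f, hf⟩ := hD.exists_eq_range hDne
  have hfk : ∀ k, IsWtildePoint (f k) := fun k => hW (f k) (hf ▸ mem_range_self k)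
  choose σs hσ using hfk
  refine ⟨fun h => σs (Nat.unpair h.length).1
      ((List.range (Nat.unpair h.length).2).map fun i =>
        h.getD (Nat.pair (Nat.unpair h.length).1 i) x),
    fun h => (hσ _).1 _, ?_⟩
  intro p hp
  have key : ∀ k m, p (Nat.pair k m) ∈ σs k (List.ofFn fun i : Fin m => p (Nat.pair k i)) := by
    intro k m
    have h1 := hp (Nat.pair k m)
    simp only [List.length_ofFn, Nat.unpair_pair] at h1
    have heq : ((List.range m).map fun i =>
        (List.ofFn fun j : Fin (Nat.pair k m) => p j).getD (Nat.pair k i) x)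
        = List.ofFn (fun i : Fin m => p (Nat.pair k i)) := by
      refine List.ext_getElem (by simp) ?_
      intro n h₁ h₂
      have hn : n < m := by simpa using h₁
      have hlt : Nat.pair k n < Nat.pair k m := Nat.pair_lt_pair_right k hn
      simp only [List.getElem_map, List.getElem_range, List.getElem_ofFn]
      rw [List.getD_eq_getElem _ _ (by simpa using hlt)]
      simp
    rwa [heq] at h1
  have hcl : ∀ k, MapClusterPt (f k) atTop (fun m => p (Nat.pair k m)) :=
    fun k => (hσ k).2 _ (fun m => key k m)
  rw [mapClusterPt_iff_frequently]
  intro U hU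
  obtain ⟨V, hVU, hVopen, hxV⟩ := mem_nhds_iff.mp hU
  obtain ⟨d, hdV, hdD⟩ := mem_closure_iff.mp hx V hVopen hxV
  obtain ⟨k, rfl⟩ : ∃ k, f k = d := by
    have : d ∈ range f := hf ▸ hdD
    exact this
  have hfreq : ∃ᶠ m in atTop, p (Nat.pair k m) ∈ V :=
    (mapClusterPt_iff_frequently.mp (hcl k)) V (hVopen.mem_nhds hdV)
  have htend : Tendsto (fun m => Nat.pair k m) atTop atTop :=
    tendsto_atTop_mono (fun m => Nat.right_le_pair k m) tendsto_id
  exact (htend.frequently hfreq).mono fun n hn => hVU hn
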